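/- Let f be a probability density on ℝ and let S ⊆ ℝ be measurable with ∫_S f > 0. Define the conditional p-value P(x) = (∫_{S ∩ {y : |y| ≥ |x|}} f) / (∫_S f). If φ is a random variable with density f conditioned on φ ∈ S, then for all α ∈ [0,1], Pr(P(φ) ≤ α) ≤ α, i.e. P(φ) is stochastically bounded below by a uniform random variable. -/

import Mathlib

open MeasureTheory Set

/-- Validity (super-uniformity) of the truncated-distribution post-selection p-value. -/
theorem stmt0 (f : ℝ → ℝ) (hf_meas : Measurable f) (hf_nonneg : ∀ x, 0 ≤ f x)
    (hf_int : Integrable f) (hf_prob : ∫ x, f x = 1)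
    (S : Set ℝ) (hS : MeasurableSet S) (hSpos : 0 < ∫ x in S, f x)
    (P : ℝ → ℝ)
    (hP : ∀ x, P x = (∫ y in S ∩ {y | |x| ≤ |y|}, f y) / ∫ y in S, f y) :
    ∀ α ∈ Set.Icc (0:ℝ) 1,
      (∫ x in S ∩ {x | P x ≤ α}, f x) / (∫ x in S, f x) ≤ α := by
  intro α hα
  obtain ⟨hα0, hα1⟩ := hα
  set c : ℝ := α * ∫ y in S, f y with hc
  have hc0 : 0 ≤ c := mul_nonneg hα0 hSpos.le
  have hint : ∀ T : Set ℝ, IntegrableOn f T := fun T => hf_int.integrableOn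
  set g : ℝ → ℝ := fun t => ∫ y in S ∩ {y | t ≤ |y|}, f y with hg
  have g_anti : Antitone g := by
    intro s t hst
    apply setIntegral_mono_set (hint _)
      (Filter.Eventually.of_forall fun x => hf_nonneg x)
    exact HasSubset.Subset.eventuallyLE (fun x hx => ⟨hx.1, hst.trans hx.2⟩)
  have hPE : {x : ℝ | P x ≤ α} = {x : ℝ | g |x| ≤ c} := by
    ext x
    simp only [mem_setOf_eq, hP x, div_le_iff₀ hSpos, hc, hg]
  rw [div_le_iff₀ hSpos, hPE, ← hc]
  -- main: ∫ over S ∩ {g|x| ≤ c} of f ≤ c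
  set A : Set ℝ := {t | 0 ≤ t ∧ g t ≤ c} with hA
  by_cases hAne : A.Nonempty
  · set t0 := sInf A with ht0
    have hbdd : BddBelow A := ⟨0, fun t ht => ht.1⟩
    have hsub : ∀ x : ℝ, g |x| ≤ c → t0 ≤ |x| := fun x hx =>
      csInf_le hbdd ⟨abs_nonneg x, hx⟩
    by_cases hgt0 : g t0 ≤ c
    · calc ∫ x in S ∩ {x | g |x| ≤ c}, f x
          ≤ ∫ x in S ∩ {x | t0 ≤ |x|}, f x :=
            setIntegral_mono_set (hint _)
              (Filter.Eventually.of_forall fun x => hf_nonneg x)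
              (HasSubset.Subset.eventuallyLE fun x hx => ⟨hx.1, hsub x hx.2⟩)
        _ ≤ c := hgt0
    · have hstrict : ∀ x : ℝ, g |x| ≤ c → t0 < |x| := by
        intro x hx
        rcases lt_or_eq_of_le (hsub x hx) with h | h
        · exact h
        · exact absurd (h ▸ hx) hgt0
      have hTle : ∀ t, t0 < t → g t ≤ c := by
        intro t ht
        obtain ⟨s, hsA, hst⟩ := exists_lt_of_csInf_lt hAne ht
        exact le_trans (g_anti hst.le) hsA.2
      set μ : Measure ℝ := volume.withDensity (fun x => ENNReal.ofReal (f x)) with hμ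
      have hμT : ∀ T : Set ℝ, MeasurableSet T → ∫ x in T, f x = (μ T).toReal := by
        intro T hT
        rw [hμ, withDensity_apply _ hT,
          integral_eq_lintegral_of_nonneg_ae
            (Filter.Eventually.of_forall fun x => hf_nonneg x)
            hf_meas.aestronglyMeasurable]
      have hμfin : ∀ T : Set ℝ, μ T ≠ ⊤ := by
        intro T
        have h1 : μ T ≤ μ univ := measure_mono (subset_univ T)
        have h2 : μ univ = ∫⁻ x, ENNReal.ofReal (f x) := by
          rw [hμ, withDensity_apply _ MeasurableSet.univ, setLIntegral_univ]
        exact (h1.trans_lt (h2 ▸ hf_int.lintegral_lt_top)).ne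
      have hmeasT : ∀ t : ℝ, MeasurableSet (S ∩ {x : ℝ | t ≤ |x|}) := fun t =>
        hS.inter (measurableSet_le measurable_const continuous_abs.measurable)
      have hmeasU : MeasurableSet (S ∩ {x : ℝ | t0 < |x|}) :=
        hS.inter (measurableSet_lt measurable_const continuous_abs.measurable)
      have hUnion : (⋃ n : ℕ, S ∩ {x : ℝ | t0 + 1/((n:ℝ)+1) ≤ |x|})
          = S ∩ {x : ℝ | t0 < |x|} := by
        ext x
        simp only [mem_iUnion, mem_inter_iff, mem_setOf_eq]
        constructor
        · rintro ⟨n, hxS, hn⟩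
          have : (0:ℝ) < 1/((n:ℝ)+1) := by positivity
          exact ⟨hxS, by linarith⟩
        · rintro ⟨hxS, hx⟩
          obtain ⟨n, hn⟩ := exists_nat_one_div_lt (sub_pos.mpr hx)
          exact ⟨n, hxS, by linarith⟩
      have hmono : Monotone (fun n : ℕ => S ∩ {x : ℝ | t0 + 1/((n:ℝ)+1) ≤ |x|}) := by
        intro n m hnm x hx
        refine ⟨hx.1, le_trans (add_le_add_right ?_ t0) hx.2⟩
        apply one_div_le_one_div_of_le (by positivity)
        have : (n:ℝ) ≤ (m:ℝ) := Nat.cast_le.mpr hnm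
        linarith
      have hμU : μ (S ∩ {x : ℝ | t0 < |x|})
          = ⨆ n : ℕ, μ (S ∩ {x : ℝ | t0 + 1/((n:ℝ)+1) ≤ |x|}) := by
        rw [← hUnion]
        exact hmono.directed_le.measure_iUnion
      have hμUle : μ (S ∩ {x : ℝ | t0 < |x|}) ≤ ENNReal.ofReal c := by
        rw [hμU]
        apply iSup_le
        intro n
        have hpos : (0:ℝ) < 1/((n:ℝ)+1) := by positivity
        have hgn : g (t0 + 1/((n:ℝ)+1)) ≤ c := hTle _ (by linarith)
        have heq : g (t0 + 1/((n:ℝ)+1))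
            = (μ (S ∩ {x : ℝ | t0 + 1/((n:ℝ)+1) ≤ |x|})).toReal := hμT _ (hmeasT _)
        calc μ (S ∩ {x : ℝ | t0 + 1/((n:ℝ)+1) ≤ |x|})
            = ENNReal.ofReal (g (t0 + 1/((n:ℝ)+1))) := by
              rw [heq, ENNReal.ofReal_toReal (hμfin _)]
          _ ≤ ENNReal.ofReal c := ENNReal.ofReal_le_ofReal hgn
      have final : ∫ x in S ∩ {x : ℝ | t0 < |x|}, f x ≤ c := by
        rw [hμT _ hmeasU]
        exact ENNReal.toReal_le_of_le_ofReal hc0 hμUle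
      calc ∫ x in S ∩ {x | g |x| ≤ c}, f x
          ≤ ∫ x in S ∩ {x : ℝ | t0 < |x|}, f x :=
            setIntegral_mono_set (hint _)
              (Filter.Eventually.of_forall fun x => hf_nonneg x)
              (HasSubset.Subset.eventuallyLE fun x hx => ⟨hx.1, hstrict x hx.2⟩)
        _ ≤ c := final
  · have hempty : S ∩ {x : ℝ | g |x| ≤ c} = ∅ := by
      ext x
      simp only [mem_inter_iff, mem_setOf_eq, mem_empty_iff_false, iff_false, not_and]
      intro _ hx
      exact hAne ⟨|x|, abs_nonneg x, hx⟩
    rw [hempty, setIntegral_empty]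
    exact hc0
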